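/- For a single good with trader value x uniform on [0,1], market maker belief c ∈ [0,1], and linear belief update π(c,x) = λc + (1−λ)x with λ ∈ [0,1], the mechanism that sells one unit at price (1 + λc)/(λ+1) (trader buys iff x exceeds this price) and buys one unit at price λc/(λ+1) (trader sells iff x is below this price) yields expected profit ∫₀¹ (a(x)(x − π(c,x)) − u(x)) dx = (2(c−1)c + 1)λ²/(2(λ+1)), where a(x) ∈ {−1,0,1} is the allocation and u(x) is the trader's utility from truthful participation. -/

import Mathlib

open MeasureTheory Set

private lemma ae_helper5 {f g : ℝ → ℝ} {A B : ℝ} (hab : A ≤ B)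
    (h : ∀ x ∈ Set.Ioo A B, f x = g x) :
    ∀ᵐ x ∂(volume : Measure ℝ), x ∈ Set.uIoc A B → f x = g x := by
  have hb : ∀ᵐ x : ℝ ∂volume, x ≠ B := by
    rw [ae_iff]
    simp only [not_not]
    have : {x : ℝ | x = B} = {B} := by ext y; simp
    rw [this]
    exact measure_singleton B
  filter_upwards [hb] with x hx hmem
  rw [Set.uIoc_of_le hab] at hmem
  exact h x ⟨hmem.1, lt_of_le_of_ne hmem.2 hx⟩

private lemma lin_int5 (r s A B : ℝ) :
    ∫ x in A..B, (r * x + s) = r * (B ^ 2 - A ^ 2) / 2 + s * (B - A) := by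
  have h1 : IntervalIntegrable (fun x : ℝ => r * x) volume A B :=
    ((continuous_const.mul continuous_id).intervalIntegrable A B)
  have h2 : IntervalIntegrable (fun _ : ℝ => s) volume A B :=
    intervalIntegrable_const
  rw [intervalIntegral.integral_add h1 h2, intervalIntegral.integral_const,
    intervalIntegral.integral_const_mul, integral_id, smul_eq_mul]
  ring

theorem stmt_5 (lam c : ℝ) (hlam : lam ∈ Set.Icc (0:ℝ) 1) (hc : c ∈ Set.Icc (0:ℝ) 1)
    (a : ℝ → ℝ)
    (ha : a = fun x => if x > (1 + lam*c)/(lam + 1) then 1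
      else if x < lam*c/(lam + 1) then -1 else 0)
    (u : ℝ → ℝ)
    (hu : u = fun x => max (max (x - (1 + lam*c)/(lam + 1)) (lam*c/(lam + 1) - x)) 0) :
    ∫ x in (0:ℝ)..1, (a x * (x - (lam*c + (1 - lam)*x)) - u x)
      = (2*(c - 1)*c + 1)*lam^2 / (2*(lam + 1)) := by
  obtain ⟨hl0, hl1⟩ := hlam
  obtain ⟨hc0, hc1⟩ := hc
  have hL : (0:ℝ) < lam + 1 := by linarith
  set p0 : ℝ := lam*c/(lam + 1) with hp0def
  set p1 : ℝ := (1 + lam*c)/(lam + 1) with hp1def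
  have hp0 : 0 ≤ p0 := div_nonneg (mul_nonneg hl0 hc0) hL.le
  have hp01 : p0 ≤ p1 := by
    rw [hp0def, hp1def]
    gcongr
    linarith
  have hp11 : p1 ≤ 1 := by
    rw [hp1def, div_le_one hL]
    nlinarith
  set f : ℝ → ℝ := fun x => a x * (x - (lam*c + (1 - lam)*x)) - u x with hf
  -- piecewise descriptions
  have e1 : ∀ x ∈ Set.Ioo (0:ℝ) p0, f x = (1 - lam) * x + (lam*c - p0) := by
    intro x hx
    have hx1 : x < p1 := lt_of_lt_of_le hx.2 hp01
    have hxp0 : x < p0 := hx.2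
    simp only [hf, ha, hu]
    rw [if_neg (by push_neg; exact hx1.le), if_pos hxp0]
    have hm : max (max (x - p1) (p0 - x)) 0 = p0 - x := by
      rw [max_eq_right (by linarith [hx.2] : x - p1 ≤ p0 - x)]
      exact max_eq_left (by linarith [hx.2])
    rw [hm]; ring
  have e2 : ∀ x ∈ Set.Ioo p0 p1, f x = 0 := by
    intro x hx
    simp only [hf, ha, hu]
    rw [if_neg (by push_neg; exact hx.2.le), if_neg (by push_neg; exact hx.1.le)]
    have hm : max (max (x - p1) (p0 - x)) 0 = 0 :=
      max_eq_right (max_le (by linarith [hx.2]) (by linarith [hx.1]))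
    rw [hm]; ring
  have e3 : ∀ x ∈ Set.Ioo p1 (1:ℝ), f x = (lam - 1) * x + (p1 - lam*c) := by
    intro x hx
    simp only [hf, ha, hu]
    rw [if_pos hx.1]
    have hm : max (max (x - p1) (p0 - x)) 0 = x - p1 := by
      rw [max_eq_left (by linarith [hx.1, hp01] : p0 - x ≤ x - p1)]
      exact max_eq_left (by linarith [hx.1])
    rw [hm]; ring
  have a1 := ae_helper5 hp0 e1
  have a2 := ae_helper5 hp01 e2
  have a3 := ae_helper5 hp11 e3
  have I1 : IntervalIntegrable f volume 0 p0 := by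
    have hcont : Continuous (fun x : ℝ => (1 - lam) * x + (lam*c - p0)) := by fun_prop
    refine (hcont.intervalIntegrable 0 p0).congr_ae ?_
    exact ((ae_restrict_iff' measurableSet_uIoc).mpr (a1.mono fun x h hx => (h hx).symm))
  have I2 : IntervalIntegrable f volume p0 p1 := by
    refine (intervalIntegrable_const (c := (0:ℝ))).congr_ae ?_
    exact ((ae_restrict_iff' measurableSet_uIoc).mpr (a2.mono fun x h hx => (h hx).symm))
  have I3 : IntervalIntegrable f volume p1 1 := by
    have hcont : Continuous (fun x : ℝ => (lam - 1) * x + (p1 - lam*c)) := by fun_prop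
    refine (hcont.intervalIntegrable p1 1).congr_ae ?_
    exact ((ae_restrict_iff' measurableSet_uIoc).mpr (a3.mono fun x h hx => (h hx).symm))
  have split : (∫ x in (0:ℝ)..1, f x)
      = (∫ x in (0:ℝ)..p0, f x) + (∫ x in p0..p1, f x) + (∫ x in p1..(1:ℝ), f x) := by
    rw [intervalIntegral.integral_add_adjacent_intervals I1 I2,
      intervalIntegral.integral_add_adjacent_intervals (I1.trans I2) I3]
  have v1 : (∫ x in (0:ℝ)..p0, f x) = (1 - lam) * (p0 ^ 2 - 0 ^ 2) / 2 + (lam*c - p0) * (p0 - 0) := by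
    rw [intervalIntegral.integral_congr_ae a1, lin_int5]
  have v2 : (∫ x in p0..p1, f x) = 0 := by
    rw [intervalIntegral.integral_congr_ae a2, intervalIntegral.integral_const, smul_zero]
  have v3 : (∫ x in p1..(1:ℝ), f x) = (lam - 1) * (1 ^ 2 - p1 ^ 2) / 2 + (p1 - lam*c) * (1 - p1) := by
    rw [intervalIntegral.integral_congr_ae a3, lin_int5]
  calc (∫ x in (0:ℝ)..1, f x)
      = (1 - lam) * (p0 ^ 2 - 0 ^ 2) / 2 + (lam*c - p0) * (p0 - 0) + 0
        + ((lam - 1) * (1 ^ 2 - p1 ^ 2) / 2 + (p1 - lam*c) * (1 - p1)) := by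
        rw [split, v1, v2, v3]
    _ = (2*(c - 1)*c + 1)*lam^2 / (2*(lam + 1)) := by
        rw [hp0def, hp1def]
        field_simp
        ring
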